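/- Let α be a natural number and let P be a polynomial with rational coefficients such that for every natural number n, (∏_{j=0}^{α} (2n − 2j − 1)) · (∑_{0 ≤ i ≤ n, i even} i^{2α+1} · C(2n, n−i)) = C(2n, n) · P(n). Then for every natural number n, (∏_{j=0}^{α+1} (2n − 2j − 1)) · (∑_{0 ≤ i ≤ n, i even} i^{2α+3} · C(2n, n−i)) = C(2n, n) · n² · ((2n − 2α − 3)·P(n) − (2n − 1)·P(n−1)), where P is evaluated at the rational numbers n and n − 1. -/

import Mathlib

lemma key_choose (M j : ℕ) (hj : j ≤ M) :
    (j + 1) * (M + 1 - j) * Nat.choose (M + 2) (j + 1)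
      = (M + 2) * (M + 1) * Nat.choose M j := by
  have h1 : (M + 1) * Nat.choose M j = Nat.choose (M + 1) (j + 1) * (j + 1) :=
    Nat.add_one_mul_choose_eq M j
  have h2 : Nat.choose (M + 1) (j + 1) = Nat.choose (M + 1) (M - j) := by
    have : (M + 1) - (j + 1) = M - j := by omega
    rw [← this, Nat.choose_symm (by omega)]
  have h3 : (M + 2) * Nat.choose (M + 1) (M - j) = Nat.choose (M + 2) (M - j + 1) * (M - j + 1) :=
    Nat.add_one_mul_choose_eq (M + 1) (M - j)
  have h4 : Nat.choose (M + 2) (M - j + 1) = Nat.choose (M + 2) (j + 1) := by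
    have h : (M + 2) - (M - j + 1) = j + 1 := by omega
    rw [← h, Nat.choose_symm (by omega)]
  rw [h4] at h3
  have h5 : M + 1 - j = M - j + 1 := by omega
  calc (j + 1) * (M + 1 - j) * Nat.choose (M + 2) (j + 1)
      = (j + 1) * (Nat.choose (M + 2) (j + 1) * (M - j + 1)) := by rw [h5]; ring
    _ = (j + 1) * ((M + 2) * Nat.choose (M + 1) (M - j)) := by rw [h3]
    _ = (M + 2) * (Nat.choose (M + 1) (j + 1) * (j + 1)) := by rw [h2]; ring
    _ = (M + 2) * ((M + 1) * Nat.choose M j) := by rw [h1]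
    _ = (M + 2) * (M + 1) * Nat.choose M j := by ring

lemma key_q (n i : ℕ) (h : i < n) :
    (i : ℚ) ^ 2 * (Nat.choose (2 * n) (n - i) : ℚ)
      = (n : ℚ) ^ 2 * (Nat.choose (2 * n) (n - i) : ℚ)
        - 2 * n * (2 * n - 1) * (Nat.choose (2 * (n - 1)) ((n - 1) - i) : ℚ) := by
  have hM : (2 * (n - 1) : ℕ) = 2 * n - 2 := by omega
  have hkey := key_choose (2 * n - 2) (n - 1 - i) (by omega)
  have e1 : n - 1 - i + 1 = n - i := by omega
  have e2 : 2 * n - 2 + 1 - (n - 1 - i) = n + i := by omega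
  have e3 : 2 * n - 2 + 2 = 2 * n := by omega
  rw [e1, e2, e3] at hkey
  have hq : ((n - i : ℕ) : ℚ) * ((n + i : ℕ) : ℚ) * (Nat.choose (2 * n) (n - i) : ℚ)
      = ((2 * n : ℕ) : ℚ) * ((2 * n - 2 + 1 : ℕ) : ℚ) * (Nat.choose (2 * n - 2) (n - 1 - i) : ℚ) := by
    exact_mod_cast congrArg (Nat.cast : ℕ → ℚ) hkey
  have c1 : ((n - i : ℕ) : ℚ) = (n : ℚ) - i := by
    have : i ≤ n := le_of_lt h
    push_cast [this]; ring
  have c2 : ((2 * n - 2 + 1 : ℕ) : ℚ) = 2 * (n : ℚ) - 1 := by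
    have : (2 * n - 2 + 1 : ℕ) = 2 * n - 1 := by omega
    rw [this]; push_cast [show 1 ≤ 2 * n by omega]; ring
  rw [c1, c2] at hq
  push_cast at hq
  rw [hM]
  linarith [hq]

lemma split_even (n : ℕ) (f : ℕ → ℚ) :
    ∑ i ∈ (Finset.range (n + 1)).filter (fun i => Even i), f i
      = (∑ i ∈ (Finset.range n).filter (fun i => Even i), f i)
        + (if Even n then f n else 0) := by
  rw [Finset.range_add_one, Finset.filter_insert]
  split
  · rw [Finset.sum_insert (by simp)]; ring
  · rw [add_zero]

/-- Let `α` be a natural number and `P` a polynomial with rational coefficients such that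
for every natural number `n`,
`(∏_{j=0}^{α} (2n − 2j − 1)) · (∑_{0 ≤ i ≤ n, i even} i^{2α+1} · C(2n, n−i)) = C(2n, n) · P(n)`.
Then for every natural number `n`,
`(∏_{j=0}^{α+1} (2n − 2j − 1)) · (∑_{0 ≤ i ≤ n, i even} i^{2α+3} · C(2n, n−i))
  = C(2n, n) · n² · ((2n − 2α − 3)·P(n) − (2n − 1)·P(n−1))`. -/
theorem stmt_7 (α : ℕ) (P : Polynomial ℚ)
    (hP : ∀ n : ℕ,
      (((∏ j ∈ Finset.range (α + 1), (2 * (n : ℤ) - 2 * (j : ℤ) - 1)) : ℤ) : ℚ) *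
          (∑ i ∈ (Finset.range (n + 1)).filter (fun i => Even i),
            (i : ℚ) ^ (2 * α + 1) * (Nat.choose (2 * n) (n - i) : ℚ))
        = (Nat.choose (2 * n) n : ℚ) * P.eval (n : ℚ)) :
    ∀ n : ℕ,
      (((∏ j ∈ Finset.range (α + 2), (2 * (n : ℤ) - 2 * (j : ℤ) - 1)) : ℤ) : ℚ) *
          (∑ i ∈ (Finset.range (n + 1)).filter (fun i => Even i),
            (i : ℚ) ^ (2 * α + 3) * (Nat.choose (2 * n) (n - i) : ℚ))
        = (Nat.choose (2 * n) n : ℚ) * (n : ℚ) ^ 2 *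
            ((2 * (n : ℚ) - 2 * (α : ℚ) - 3) * P.eval (n : ℚ)
              - (2 * (n : ℚ) - 1) * P.eval ((n : ℚ) - 1)) := by
  intro n
  rcases Nat.eq_zero_or_pos n with hn0 | hn
  · subst hn0
    have h0 : (∑ i ∈ (Finset.range 1).filter (fun i => Even i),
        (i : ℚ) ^ (2 * α + 3) * (Nat.choose (2 * 0) (0 - i) : ℚ)) = 0 := by
      rw [Finset.range_one]
      rw [Finset.filter_singleton]
      simp
    rw [h0]
    simp
  obtain ⟨m, rfl⟩ : ∃ m, n = m + 1 := ⟨n - 1, by omega⟩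
  set n := m + 1 with hn_def
  set nq : ℚ := (n : ℚ) with hnq
  set S3 : ℚ := ∑ i ∈ (Finset.range (n + 1)).filter (fun i => Even i),
      (i : ℚ) ^ (2 * α + 3) * (Nat.choose (2 * n) (n - i) : ℚ) with hS3
  set S1 : ℚ := ∑ i ∈ (Finset.range (n + 1)).filter (fun i => Even i),
      (i : ℚ) ^ (2 * α + 1) * (Nat.choose (2 * n) (n - i) : ℚ) with hS1
  set S0 : ℚ := ∑ i ∈ (Finset.range (m + 1)).filter (fun i => Even i),
      (i : ℚ) ^ (2 * α + 1) * (Nat.choose (2 * m) (m - i) : ℚ) with hS0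
  -- sum recurrence
  have hrec : S3 = nq ^ 2 * S1 - 2 * nq * (2 * nq - 1) * S0 := by
    have e3 := split_even n (fun i => (i : ℚ) ^ (2 * α + 3) * (Nat.choose (2 * n) (n - i) : ℚ))
    have e1 := split_even n (fun i => (i : ℚ) ^ (2 * α + 1) * (Nat.choose (2 * n) (n - i) : ℚ))
    have e0 : S0 = ∑ i ∈ (Finset.range n).filter (fun i => Even i),
        (i : ℚ) ^ (2 * α + 1) * (Nat.choose (2 * m) (m - i) : ℚ) := hS0
    have hmid : ∑ i ∈ (Finset.range n).filter (fun i => Even i),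
        (i : ℚ) ^ (2 * α + 3) * (Nat.choose (2 * n) (n - i) : ℚ)
        = ∑ i ∈ (Finset.range n).filter (fun i => Even i),
          (nq ^ 2 * ((i : ℚ) ^ (2 * α + 1) * (Nat.choose (2 * n) (n - i) : ℚ))
            - 2 * nq * (2 * nq - 1) *
              ((i : ℚ) ^ (2 * α + 1) * (Nat.choose (2 * m) (m - i) : ℚ))) := by
      apply Finset.sum_congr rfl
      intro i hi
      have hi' : i < n := Finset.mem_range.mp (Finset.mem_filter.mp hi).1
      have hk := key_q n i hi'
      have hm' : n - 1 = m := by omega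
      rw [hm'] at hk
      have hpw : (i : ℚ) ^ (2 * α + 3) = (i : ℚ) ^ (2 * α + 1) * (i : ℚ) ^ 2 := by
        rw [show 2 * α + 3 = (2 * α + 1) + 2 from rfl, pow_add]
      rw [hpw, hnq]
      linear_combination ((i : ℚ)) ^ (2 * α + 1) * hk
    rw [hS3, hS1, e3, e1, e0, hmid, Finset.sum_sub_distrib, ← Finset.mul_sum, ← Finset.mul_sum]
    have hch : (Nat.choose (2 * n) (n - n) : ℚ) = 1 := by simp
    have hpw2 : (n : ℚ) ^ (2 * α + 3) = nq ^ 2 * (n : ℚ) ^ (2 * α + 1) := by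
      rw [hnq, show 2 * α + 3 = (2 * α + 1) + 2 from rfl, pow_add]; ring
    by_cases hev : Even n
    · rw [if_pos hev, if_pos hev, hch, hpw2]; ring
    · rw [if_neg hev, if_neg hev]; ring
  -- binomial relation
  have hCC : nq ^ 2 * (Nat.choose (2 * n) n : ℚ)
      = 2 * nq * (2 * nq - 1) * (Nat.choose (2 * m) m : ℚ) := by
    have hkey := key_choose (2 * n - 2) (n - 1) (by omega)
    have e1 : n - 1 + 1 = n := by omega
    have e2 : 2 * n - 2 + 1 - (n - 1) = n := by omega
    have e3 : 2 * n - 2 + 2 = 2 * n := by omega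
    have e4 : 2 * n - 2 = 2 * m := by omega
    have e5 : n - 1 = m := by omega
    rw [e1, e2, e3, e4, e5] at hkey
    have hq := congrArg (Nat.cast : ℕ → ℚ) hkey
    push_cast at hq
    rw [hnq]
    push_cast
    have hm1 : (2 * (m : ℚ) + 1) = 2 * (n : ℚ) - 1 := by rw [hn_def]; push_cast; ring
    rw [hm1] at hq
    linear_combination hq
  -- products (integer level)
  have hnZ : (n : ℤ) = (m : ℤ) + 1 := by rw [hn_def]; push_cast; ring
  have hprodZ1 : (∏ j ∈ Finset.range (α + 2), (2 * (n : ℤ) - 2 * (j : ℤ) - 1))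
      = (∏ j ∈ Finset.range (α + 1), (2 * (n : ℤ) - 2 * (j : ℤ) - 1))
        * (2 * (n : ℤ) - 2 * (α : ℤ) - 3) := by
    rw [Finset.prod_range_succ]
    push_cast
    ring
  have hprodZ2 : (∏ j ∈ Finset.range (α + 2), (2 * (n : ℤ) - 2 * (j : ℤ) - 1))
      = (∏ j ∈ Finset.range (α + 1), (2 * (m : ℤ) - 2 * (j : ℤ) - 1)) * (2 * (n : ℤ) - 1) := by
    rw [Finset.prod_range_succ']
    have hcong : ∀ j ∈ Finset.range (α + 1),
        (2 * (n : ℤ) - 2 * ((j + 1 : ℕ) : ℤ) - 1) = (2 * (m : ℤ) - 2 * (j : ℤ) - 1) := by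
      intro j _
      rw [hnZ]; push_cast; ring
    rw [Finset.prod_congr rfl hcong]
    norm_num
  have hprod1 : (((∏ j ∈ Finset.range (α + 2), (2 * (n : ℤ) - 2 * (j : ℤ) - 1)) : ℤ) : ℚ)
      = (((∏ j ∈ Finset.range (α + 1), (2 * (n : ℤ) - 2 * (j : ℤ) - 1)) : ℤ) : ℚ)
        * (2 * nq - 2 * (α : ℚ) - 3) := by
    rw [hprodZ1, Int.cast_mul, hnq]
    push_cast [-Int.cast_prod]
    ring
  have hprod2 : (((∏ j ∈ Finset.range (α + 2), (2 * (n : ℤ) - 2 * (j : ℤ) - 1)) : ℤ) : ℚ)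
      = (((∏ j ∈ Finset.range (α + 1), (2 * (m : ℤ) - 2 * (j : ℤ) - 1)) : ℤ) : ℚ)
        * (2 * nq - 1) := by
    rw [hprodZ2, Int.cast_mul, hnq]
    push_cast [-Int.cast_prod]
    ring
  have hA := hP n
  have hB := hP m
  have hmq : ((m : ℚ)) = nq - 1 := by rw [hnq, hn_def]; push_cast; ring
  rw [hmq] at hB
  rw [← hS1] at hA
  rw [← hS0] at hB
  set A : ℚ := (((∏ j ∈ Finset.range (α + 1), (2 * (n : ℤ) - 2 * (j : ℤ) - 1)) : ℤ) : ℚ) with hAdef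
  set B : ℚ := (((∏ j ∈ Finset.range (α + 1), (2 * (m : ℤ) - 2 * (j : ℤ) - 1)) : ℤ) : ℚ) with hBdef
  set PB : ℚ := (((∏ j ∈ Finset.range (α + 2), (2 * (n : ℤ) - 2 * (j : ℤ) - 1)) : ℤ) : ℚ) with hPBdef
  linear_combination PB * hrec + nq ^ 2 * S1 * hprod1 - 2 * nq * (2 * nq - 1) * S0 * hprod2
    + nq ^ 2 * (2 * nq - 2 * (α : ℚ) - 3) * hA
    - 2 * nq * (2 * nq - 1) * (2 * nq - 1) * hB
    + (2 * nq - 1) * Polynomial.eval (nq - 1) P * hCC
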